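/- Let f ∈ O(ℂⁿ) be entire with power series f(z) = Σ_α a_α z^α, and suppose that for some m ∈ ℕ, a ∈ [0, d_m), and constant C > 0, |f(z)| ≤ C(1+|z|)^a · e^{m H_S(z)} for all z ∈ ℂⁿ, where d_m is the L¹-distance between mS and ℕⁿ∖mS. Then a_α = 0 for every α ∈ ℕⁿ ∖ mS, i.e. f ∈ P^S_m(ℂⁿ). -/

import Mathlib

open MeasureTheory Real Filter

/-- expo k x = exp(i k x). -/
noncomputable def expo (k : ℤ) (x : ℝ) : ℂ := Complex.exp (((k : ℝ) * x : ℝ) * Complex.I)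

lemma expo_abs (k : ℤ) (x : ℝ) : ‖expo k x‖ = 1 :=
  Complex.norm_exp_ofReal_mul_I _

lemma expo_integral_zero {k : ℤ} (hk : k ≠ 0) :
    ∫ x in Set.Ioc (0:ℝ) (2*π), expo k x = 0 := by
  rw [← intervalIntegral.integral_of_le (by positivity)]
  have h1 : ∀ x : ℝ, expo k x = Complex.exp (((k : ℂ) * Complex.I) * x) := by
    intro x; unfold expo; congr 1; push_cast; ring
  simp_rw [h1]
  rw [integral_exp_mul_complex (by simp [hk, Complex.I_ne_zero])]
  have h2 : (k : ℂ) * Complex.I * ((2*π : ℝ):ℂ) = (k : ℤ) * (2 * (π:ℂ) * Complex.I) := by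
    push_cast; ring
  rw [h2, Complex.exp_int_mul_two_pi_mul_I]
  simp

lemma expo_integral_zero' : ∫ x in Set.Ioc (0:ℝ) (2*π), expo 0 x = ((2*π : ℝ) : ℂ) := by
  simp [expo, Real.pi_nonneg, Real.volume_Ioc, ENNReal.toReal_ofReal, two_mul,
    Real.pi_nonneg, Complex.real_smul]

lemma box_integral {n : ℕ} (h : Fin n → ℝ → ℂ) :
    ∫ θ in Set.univ.pi (fun _ : Fin n => Set.Ioc (0:ℝ) (2*π)), (∏ j, h j (θ j)) =
      ∏ j, ∫ x in Set.Ioc (0:ℝ) (2*π), h j x := by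
  set B : Set (Fin n → ℝ) := Set.univ.pi (fun _ : Fin n => Set.Ioc (0:ℝ) (2*π)) with hB
  have hBm : MeasurableSet B := MeasurableSet.univ_pi (fun _ => measurableSet_Ioc)
  rw [← MeasureTheory.integral_indicator hBm]
  have key : ∀ θ : Fin n → ℝ, B.indicator (fun θ => ∏ j, h j (θ j)) θ =
      ∏ j, (Set.Ioc (0:ℝ) (2*π)).indicator (h j) (θ j) := by
    intro θ
    by_cases hθ : θ ∈ B
    · rw [Set.indicator_of_mem hθ]
      exact Finset.prod_congr rfl fun j _ =>
        (Set.indicator_of_mem (Set.mem_univ_pi.mp hθ j) _).symm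
    · rw [Set.indicator_of_notMem hθ]
      obtain ⟨j, hj⟩ := not_forall.mp (fun hall => hθ (Set.mem_univ_pi.mpr hall))
      exact (Finset.prod_eq_zero (Finset.mem_univ j) (Set.indicator_of_notMem hj _)).symm
  rw [show (fun θ => B.indicator (fun θ => ∏ j, h j (θ j)) θ) =
      fun θ => ∏ j, (Set.Ioc (0:ℝ) (2*π)).indicator (h j) (θ j) from funext key]
  rw [MeasureTheory.integral_fintype_prod_volume_eq_prod
    (f := fun j x => (Set.Ioc (0:ℝ) (2*π)).indicator (h j) x)]
  exact Finset.prod_congr rfl fun j _ =>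
    MeasureTheory.integral_indicator measurableSet_Ioc

lemma coeff_bound {n : ℕ} (f : (Fin n → ℂ) → ℂ) (a : (Fin n → ℕ) → ℂ)
    (hexp : ∀ z : Fin n → ℂ, HasSum (fun β : Fin n → ℕ => a β * ∏ j, z j ^ β j) (f z))
    (r : Fin n → ℝ) (hr : ∀ j, 0 < r j) (M : ℝ)
    (hM : ∀ θ : Fin n → ℝ,
      ‖f (fun j => (r j : ℂ) * Complex.exp ((θ j : ℂ) * Complex.I))‖ ≤ M)
    (α : Fin n → ℕ) :
    ‖a α‖ * ∏ j, r j ^ α j ≤ M := by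
  classical
  set B : Set (Fin n → ℝ) := Set.univ.pi (fun _ : Fin n => Set.Ioc (0:ℝ) (2*π)) with hBdef
  have hBm : MeasurableSet B := MeasurableSet.univ_pi (fun _ => measurableSet_Ioc)
  set μ : Measure (Fin n → ℝ) := (volume : Measure (Fin n → ℝ)).restrict B with hμdef
  have hμuniv : μ Set.univ = ∏ _j : Fin n, ENNReal.ofReal (2*π) := by
    rw [hμdef, Measure.restrict_apply_univ, hBdef, volume_pi_pi]
    simp [Real.volume_Ioc]
  haveI hfin : IsFiniteMeasure μ := by
    constructor
    rw [hμuniv]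
    exact ENNReal.prod_lt_top (fun _ _ => ENNReal.ofReal_lt_top)
  have hμreal : (μ Set.univ).toReal = (2*π)^n := by
    rw [hμuniv, ENNReal.toReal_prod]
    simp [ENNReal.toReal_ofReal Real.two_pi_pos.le, ENNReal.toReal_ofReal Real.pi_pos.le]
  set z : (Fin n → ℝ) → Fin n → ℂ := fun θ j => (r j : ℂ) * Complex.exp ((θ j : ℂ) * Complex.I)
    with hzdef
  set ker : (Fin n → ℝ) → ℂ := fun θ => ∏ j, expo (-(α j : ℤ)) (θ j) with hkerdef
  set F : (Fin n → ℕ) → (Fin n → ℝ) → ℂ :=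
    fun β θ => (a β * ∏ j, z θ j ^ β j) * ker θ with hFdef
  -- rewrite F in factored form
  have hF : ∀ β θ, F β θ =
      (a β * ∏ j, (r j : ℂ) ^ β j) * ∏ j, expo ((β j : ℤ) - (α j : ℤ)) (θ j) := by
    intro β θ
    have hfac : ∀ j, z θ j ^ β j * expo (-(α j : ℤ)) (θ j) =
        (r j : ℂ) ^ β j * expo ((β j : ℤ) - (α j : ℤ)) (θ j) := by
      intro j
      unfold expo
      rw [hzdef, mul_pow, ← Complex.exp_nat_mul, mul_assoc, ← Complex.exp_add]
      congr 2
      push_cast; ring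
    calc F β θ = a β * ∏ j, (z θ j ^ β j * expo (-(α j : ℤ)) (θ j)) := by
          rw [hFdef, Finset.prod_mul_distrib]; ring
      _ = a β * ∏ j, ((r j : ℂ) ^ β j * expo ((β j : ℤ) - (α j : ℤ)) (θ j)) := by
          rw [Finset.prod_congr rfl fun j _ => hfac j]
      _ = _ := by rw [Finset.prod_mul_distrib]; ring
  have habsz : ∀ θ j, ‖z θ j‖ = r j := by
    intro θ j
    rw [hzdef]
    simp [norm_mul, Complex.norm_exp_ofReal_mul_I, Complex.norm_real, Real.norm_eq_abs, abs_of_pos (hr j)]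
  have habsker : ∀ θ, ‖ker θ‖ = 1 := by
    intro θ
    rw [hkerdef, norm_prod]
    simp [expo_abs]
  have habsF : ∀ β θ, ‖F β θ‖ = ‖a β‖ * ∏ j, r j ^ β j := by
    intro β θ
    rw [hFdef]
    simp only [norm_mul, norm_prod, norm_pow, habsker, mul_one]
    congr 1
    exact Finset.prod_congr rfl fun j _ => by rw [habsz]
  -- the integral of each term
  have hIntF : ∀ β, ∫ θ, F β θ ∂μ =
      if β = α then (a α * ∏ j, (r j : ℂ) ^ α j) * ((2*π : ℝ) : ℂ) ^ n else 0 := by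
    intro β
    rw [show (fun θ => F β θ) = fun θ =>
        (a β * ∏ j, (r j : ℂ) ^ β j) * ∏ j, expo ((β j : ℤ) - (α j : ℤ)) (θ j)
      from funext fun θ => hF β θ]
    rw [MeasureTheory.integral_const_mul]
    rw [hμdef, box_integral (fun j x => expo ((β j : ℤ) - (α j : ℤ)) x)]
    by_cases hβ : β = α
    · subst hβ
      rw [if_pos rfl]
      congr 1
      rw [Finset.prod_congr rfl fun j _ => by rw [sub_self, expo_integral_zero']]
      simp
    · rw [if_neg hβ]
      obtain ⟨j, hj⟩ := Function.ne_iff.mp hβ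
      have : ∫ x in Set.Ioc (0:ℝ) (2*π), expo ((β j : ℤ) - (α j : ℤ)) x = 0 :=
        expo_integral_zero (by
          simpa [sub_eq_zero] using hj)
      have hzero : (∏ j, ∫ x in Set.Ioc (0:ℝ) (2*π), expo ((β j : ℤ) - (α j : ℤ)) x) = 0 :=
        Finset.prod_eq_zero (Finset.mem_univ j) this
      rw [hzero, mul_zero]
  -- dominated convergence
  have hbound_summable : Summable (fun β : Fin n → ℕ => ‖a β‖ * ∏ j, r j ^ β j) := by
    have h1 : Summable (fun β : Fin n → ℕ => a β * ∏ j, ((r j : ℂ)) ^ β j) :=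
      (hexp (fun j => (r j : ℂ))).summable
    have h2 := summable_norm_iff.mpr h1
    refine h2.congr fun β => ?_
    simp only [norm_mul, norm_prod, norm_pow, Complex.norm_real, Real.norm_eq_abs]
    congr 1
    exact Finset.prod_congr rfl fun j _ => by rw [abs_of_pos (hr j)]
  have hcont : ∀ β, Continuous (F β) := by
    intro β
    rw [hFdef]
    apply Continuous.mul
    · apply Continuous.mul continuous_const
      apply continuous_finset_prod
      intro j _
      apply Continuous.pow
      exact continuous_const.mul (Complex.continuous_exp.comp
        ((Complex.continuous_ofReal.comp (continuous_apply j)).mul continuous_const))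
    · apply continuous_finset_prod
      intro j _
      exact Complex.continuous_exp.comp
        ((Complex.continuous_ofReal.comp
          (continuous_const.mul (continuous_apply j))).mul continuous_const)
  have hsum1 : HasSum (fun β => ∫ θ, F β θ ∂μ) (∫ θ, f (z θ) * ker θ ∂μ) := by
    apply MeasureTheory.hasSum_integral_of_dominated_convergence
      (fun β _ => ‖a β‖ * ∏ j, r j ^ β j)
    · exact fun β => (hcont β).aestronglyMeasurable
    · exact fun β => ae_of_all _ fun θ => le_of_eq (habsF β θ)
    · exact ae_of_all _ fun θ => hbound_summable
    · exact MeasureTheory.integrable_const _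
    · exact ae_of_all _ fun θ => (hexp (z θ)).mul_right (ker θ)
  have hsum2 : HasSum
      (fun β : Fin n → ℕ => if β = α then (a α * ∏ j, (r j : ℂ) ^ α j) * ((2*π : ℝ) : ℂ) ^ n else 0)
      ((a α * ∏ j, (r j : ℂ) ^ α j) * ((2*π : ℝ) : ℂ) ^ n) := hasSum_ite_eq α _
  rw [show (fun β => ∫ θ, F β θ ∂μ) = fun β : Fin n → ℕ =>
      if β = α then (a α * ∏ j, (r j : ℂ) ^ α j) * ((2*π : ℝ) : ℂ) ^ n else 0
    from funext hIntF] at hsum1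
  have heq : (a α * ∏ j, (r j : ℂ) ^ α j) * ((2*π : ℝ) : ℂ) ^ n = ∫ θ, f (z θ) * ker θ ∂μ :=
    hsum2.unique hsum1
  have hle : ‖∫ θ, f (z θ) * ker θ ∂μ‖ ≤ M * (μ Set.univ).toReal := by
    apply MeasureTheory.norm_integral_le_of_norm_le_const
    refine ae_of_all _ fun θ => ?_
    rw [norm_mul, habsker, mul_one]
    exact hM θ
  rw [← heq, hμreal] at hle
  have habsc : ‖(a α * ∏ j, (r j : ℂ) ^ α j) * ((2*π : ℝ) : ℂ) ^ n‖ =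
      (‖a α‖ * ∏ j, r j ^ α j) * (2*π)^n := by
    have hj : ∀ j, ‖(r j : ℂ) ^ α j‖ = r j ^ α j := fun j => by
      rw [norm_pow, Complex.norm_real, Real.norm_eq_abs, abs_of_pos (hr j)]
    have habs_r : ∀ j, |r j| = r j := fun j => abs_of_pos (hr j)
    simp [norm_mul, norm_prod, hj, Complex.norm_real, Real.norm_eq_abs,
      abs_of_pos Real.pi_pos, habs_r, mul_assoc]
  rw [habsc] at hle
  have hpow : (0:ℝ) < (2*π)^n := pow_pos Real.two_pi_pos n
  exact le_of_mul_le_mul_right hle hpow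



open Pointwise

/-- Support function of `S`. -/
noncomputable def suppFn {n : ℕ} (S : Set (Fin n → ℝ)) (ξ : Fin n → ℝ) : ℝ :=
  sSup ((fun s => ∑ j, s j * ξ j) '' S)

/-- Logarithmic supporting function of `S` on `(ℂ*)ⁿ`. -/
noncomputable def HS {n : ℕ} (S : Set (Fin n → ℝ)) (z : Fin n → ℂ) : ℝ :=
  suppFn S (fun j => Real.log ‖z j‖)

/-- Liouville-type theorem: an entire function with growth `C(1+|z|)^a e^{m H_S(z)}`
for some `a < d_m`, where `d_m` is the `L¹`-distance between `mS` and `ℕⁿ∖mS`, has all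
Taylor coefficients with exponent outside `mS` equal to zero, i.e. `f ∈ P^S_m(ℂⁿ)`. -/
theorem stmt_16 {n : ℕ} (S : Set (Fin n → ℝ)) (hc : IsCompact S) (hconv : Convex ℝ S)
    (h0 : (0 : Fin n → ℝ) ∈ S) (hpos : ∀ s ∈ S, ∀ i, 0 ≤ s i)
    (f : (Fin n → ℂ) → ℂ) (hf : Differentiable ℂ f)
    (a : (Fin n → ℕ) → ℂ)
    (hexp : ∀ z : Fin n → ℂ, HasSum (fun α : Fin n → ℕ => a α * ∏ j, z j ^ α j) (f z))
    (m : ℕ) (dm : ℝ)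
    (hdm : dm = sInf {d : ℝ | ∃ x ∈ (m : ℝ) • S, ∃ β : Fin n → ℕ,
        (fun j => (β j : ℝ)) ∉ (m : ℝ) • S ∧ d = ∑ j, |x j - (β j : ℝ)|})
    (aexp C : ℝ) (ha0 : 0 ≤ aexp) (ha : aexp < dm) (hC : 0 < C)
    (hgrow : ∀ z : Fin n → ℂ, (∀ j, z j ≠ 0) →
        ‖f z‖ ≤
          C * (1 + Real.sqrt (∑ j, ‖z j‖ ^ 2)) ^ aexp *
            Real.exp (m * HS S z)) :
    ∀ α : Fin n → ℕ, (fun j => (α j : ℝ)) ∉ (m : ℝ) • S → a α = 0 := by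
  classical
  intro α hα
  rcases Nat.eq_zero_or_pos n with hn | hn
  · exfalso
    apply hα
    subst hn
    exact ⟨0, h0, funext fun j => j.elim0⟩
  haveI : Nonempty (Fin n) := ⟨⟨0, hn⟩⟩
  -- the enlarged set K = mS + aexp·simplex
  set T : Set (Fin n → ℝ) := {y | (∀ j, 0 ≤ y j) ∧ ∑ j, y j ≤ aexp} with hTdef
  set K : Set (Fin n → ℝ) := ((m : ℝ) • S) + T with hKdef
  have hbdd : BddBelow {d : ℝ | ∃ x ∈ (m : ℝ) • S, ∃ β : Fin n → ℕ,
      (fun j => (β j : ℝ)) ∉ (m : ℝ) • S ∧ d = ∑ j, |x j - (β j : ℝ)|} := by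
    refine ⟨0, ?_⟩
    rintro d ⟨x, hx, β, hβ, rfl⟩
    exact Finset.sum_nonneg fun j _ => abs_nonneg _
  have hαK : (fun j => (α j : ℝ)) ∉ K := by
    rintro ⟨x, hx, y, hy, hxy⟩
    have h1 : dm ≤ ∑ j, |x j - (α j : ℝ)| := by
      rw [hdm]
      exact csInf_le hbdd ⟨x, hx, α, hα, rfl⟩
    have h2 : ∑ j, |x j - (α j : ℝ)| = ∑ j, y j := by
      refine Finset.sum_congr rfl fun j _ => ?_
      have : x j + y j = (α j : ℝ) := congrFun hxy j
      have hxj : x j - (α j : ℝ) = -y j := by linarith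
      rw [hxj, abs_neg, abs_of_nonneg (hy.1 j)]
    have := hy.2
    linarith
  have hTconv : Convex ℝ T := by
    rintro y hy w hw p q hp hq hpq
    constructor
    · intro j
      exact add_nonneg (mul_nonneg hp (hy.1 j)) (mul_nonneg hq (hw.1 j))
    · have : ∑ j, (p • y + q • w) j = p * ∑ j, y j + q * ∑ j, w j := by
        simp [Finset.sum_add_distrib, Finset.mul_sum]
      rw [this]
      calc p * ∑ j, y j + q * ∑ j, w j ≤ p * aexp + q * aexp := by
            gcongr
            · exact hy.2
            · exact hw.2
        _ = aexp := by rw [← add_mul, hpq, one_mul]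
  have hTclosed : IsClosed T := by
    have : T = (⋂ j, {y : Fin n → ℝ | 0 ≤ y j}) ∩ {y : Fin n → ℝ | ∑ j, y j ≤ aexp} := by
      ext y; simp [hTdef, Set.mem_iInter]
    rw [this]
    exact (isClosed_iInter fun j => isClosed_le continuous_const (continuous_apply j)).inter
      (isClosed_le (continuous_finset_sum _ fun j _ => continuous_apply j) continuous_const)
  have hTcomp : IsCompact T := by
    refine (isCompact_Icc (a := (0 : Fin n → ℝ)) (b := fun _ => aexp)).of_isClosed_subset
      hTclosed ?_
    rintro y ⟨hy1, hy2⟩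
    constructor
    · intro j; exact hy1 j
    · intro j
      calc y j ≤ ∑ i, y i := Finset.single_le_sum (fun i _ => hy1 i) (Finset.mem_univ j)
        _ ≤ aexp := hy2
  have hKconv : Convex ℝ K := (hconv.smul (m : ℝ)).add hTconv
  have hKclosed : IsClosed K := ((hc.smul (m : ℝ)).add hTcomp).isClosed
  obtain ⟨φ, u, hKu, hu⟩ := geometric_hahn_banach_closed_point hKconv hKclosed hαK
  set ξ : Fin n → ℝ := fun j => φ (fun i => if j = i then (1 : ℝ) else 0) with hξdef
  have hφ : ∀ y : Fin n → ℝ, φ y = ∑ j, y j * ξ j := by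
    intro y
    conv_lhs => rw [pi_eq_sum_univ y]
    rw [map_sum]
    exact Finset.sum_congr rfl fun j _ => by rw [φ.map_smul]; rfl
  set cmax : ℝ := Finset.univ.sup' Finset.univ_nonempty ξ with hcmax
  set cp : ℝ := max cmax 0 with hcp
  have hcp0 : 0 ≤ cp := le_max_right _ _
  have hSb : ∀ s ∈ S, (m : ℝ) * (∑ j, s j * ξ j) < u - aexp * cp := by
    intro s hs
    rcases le_or_gt cmax 0 with hcm | hcm
    · have hcpz : cp = 0 := max_eq_right hcm
      have hb : (m : ℝ) • s + 0 ∈ K :=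
        ⟨_, Set.smul_mem_smul_set hs, 0, ⟨fun j => le_refl 0, by simpa using ha0⟩, rfl⟩
      have h := hKu _ hb
      rw [hφ] at h
      have he : ∑ j, ((m : ℝ) • s + 0) j * ξ j = (m : ℝ) * ∑ j, s j * ξ j := by
        simp [Finset.mul_sum]
        exact Finset.sum_congr rfl fun j _ => by ring
      rw [he] at h
      rw [hcpz]
      linarith
    · obtain ⟨j0, -, hj0⟩ := Finset.exists_mem_eq_sup' (Finset.univ_nonempty) ξ
      have hcpv : cp = ξ j0 := by rw [hcp, max_eq_left hcm.le, hcmax, hj0]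
      set y : Fin n → ℝ := fun j => if j0 = j then aexp else 0 with hydef
      have hyT : y ∈ T := by
        constructor
        · intro j
          simp only [hydef]
          split <;> simp [ha0]
        · simp [hydef]
      have hb : (m : ℝ) • s + y ∈ K := ⟨_, Set.smul_mem_smul_set hs, y, hyT, rfl⟩
      have h := hKu _ hb
      rw [hφ] at h
      have he : ∑ j, ((m : ℝ) • s + y) j * ξ j =
          (m : ℝ) * (∑ j, s j * ξ j) + aexp * ξ j0 := by
        have : ∀ j, ((m : ℝ) • s + y) j * ξ j =
            (m : ℝ) * (s j * ξ j) + (if j0 = j then aexp * ξ j else 0) := by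
          intro j
          simp only [Pi.add_apply, Pi.smul_apply, smul_eq_mul, hydef]
          split <;> ring
        rw [Finset.sum_congr rfl fun j _ => this j, Finset.sum_add_distrib,
          Finset.sum_ite_eq (Finset.univ) j0 (fun j => aexp * ξ j), ← Finset.mul_sum]
        simp
      rw [he] at h
      rw [hcpv]
      linarith
  have hαφ : u < ∑ j, (α j : ℝ) * ξ j := by
    have := hu
    rwa [hφ] at this
  set A : ℝ := ∑ j, (α j : ℝ) * ξ j with hA
  set Kc : ℝ := C * (1 + Real.sqrt n) ^ aexp with hKc
  have hKcpos : 0 < Kc := by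
    apply mul_pos hC
    apply Real.rpow_pos_of_pos
    positivity
  have key : ∀ t : ℝ, 0 ≤ t → ‖a α‖ ≤ Kc * Real.exp (t * (u - A)) := by
    intro t ht
    set r : Fin n → ℝ := fun j => Real.exp (t * ξ j) with hrdef
    have hr : ∀ j, 0 < r j := fun j => Real.exp_pos _
    set M : ℝ := C * (1 + Real.sqrt (∑ j, r j ^ 2)) ^ aexp *
      Real.exp (m * suppFn S (fun j => t * ξ j)) with hMdef
    have hM : ∀ θ : Fin n → ℝ,
        ‖f (fun j => (r j : ℂ) * Complex.exp ((θ j : ℂ) * Complex.I))‖ ≤ M := by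
      intro θ
      have hz0 : ∀ j, (r j : ℂ) * Complex.exp ((θ j : ℂ) * Complex.I) ≠ 0 := fun j =>
        mul_ne_zero (Complex.ofReal_ne_zero.mpr (hr j).ne') (Complex.exp_ne_zero _)
      have habs : ∀ j, ‖(r j : ℂ) * Complex.exp ((θ j : ℂ) * Complex.I)‖ = r j := by
        intro j
        simp [norm_mul, Complex.norm_exp_ofReal_mul_I, Complex.norm_real, Real.norm_eq_abs, abs_of_pos (hr j)]
      have hgr := hgrow _ hz0
      rw [hMdef]
      have hHS : HS S (fun j => (r j : ℂ) * Complex.exp ((θ j : ℂ) * Complex.I)) =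
          suppFn S (fun j => t * ξ j) := by
        unfold HS
        congr 1
        funext j
        rw [habs j, hrdef, Real.log_exp]
      calc ‖f (fun j => (r j : ℂ) * Complex.exp ((θ j : ℂ) * Complex.I))‖
          ≤ C * (1 + Real.sqrt (∑ j, ‖(r j : ℂ) *
              Complex.exp ((θ j : ℂ) * Complex.I)‖ ^ 2)) ^ aexp *
            Real.exp (m * HS S (fun j => (r j : ℂ) * Complex.exp ((θ j : ℂ) * Complex.I))) := hgr
        _ = C * (1 + Real.sqrt (∑ j, r j ^ 2)) ^ aexp *
            Real.exp (m * suppFn S (fun j => t * ξ j)) := by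
          have hsum : (∑ j, ‖(r j : ℂ) *
              Complex.exp ((θ j : ℂ) * Complex.I)‖ ^ 2) = ∑ j, r j ^ 2 :=
            Finset.sum_congr rfl fun j _ => by rw [habs j]
          rw [hHS, hsum]
    have hcb := coeff_bound f a hexp r hr M hM α
    have hprod : ∏ j, r j ^ α j = Real.exp (t * A) := by
      calc ∏ j, r j ^ α j = ∏ j, Real.exp ((α j : ℝ) * (t * ξ j)) :=
            Finset.prod_congr rfl fun j _ => (Real.exp_nat_mul _ _).symm
        _ = Real.exp (∑ j, (α j : ℝ) * (t * ξ j)) := (Real.exp_sum _ _).symm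
        _ = Real.exp (t * A) := by
            congr 1
            rw [hA, Finset.mul_sum]
            exact Finset.sum_congr rfl fun j _ => by ring
    have h1 : Real.sqrt (∑ j, r j ^ 2) ≤ Real.sqrt n * Real.exp (t * cp) := by
      have hsum : (∑ j, r j ^ 2) ≤ (n : ℝ) * (Real.exp (t * cp)) ^ 2 := by
        calc ∑ j, r j ^ 2 ≤ ∑ _j : Fin n, (Real.exp (t * cp)) ^ 2 := by
              refine Finset.sum_le_sum fun j _ => ?_
              have : r j ≤ Real.exp (t * cp) := by
                rw [hrdef]
                apply Real.exp_le_exp.mpr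
                apply mul_le_mul_of_nonneg_left _ ht
                calc ξ j ≤ cmax := Finset.le_sup' ξ (Finset.mem_univ j)
                  _ ≤ cp := le_max_left _ _
              exact pow_le_pow_left₀ (hr j).le this 2
          _ = (n : ℝ) * (Real.exp (t * cp)) ^ 2 := by
              rw [Finset.sum_const, Finset.card_univ, Fintype.card_fin, nsmul_eq_mul]
      calc Real.sqrt (∑ j, r j ^ 2) ≤ Real.sqrt ((n : ℝ) * (Real.exp (t * cp)) ^ 2) :=
            Real.sqrt_le_sqrt hsum
        _ = Real.sqrt n * Real.exp (t * cp) := by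
            rw [Real.sqrt_mul (Nat.cast_nonneg n), Real.sqrt_sq (Real.exp_pos _).le]
    have h2 : (1 + Real.sqrt (∑ j, r j ^ 2)) ^ aexp ≤
        (1 + Real.sqrt n) ^ aexp * Real.exp (t * cp * aexp) := by
      have e1 : (1 : ℝ) ≤ Real.exp (t * cp) := Real.one_le_exp (mul_nonneg ht hcp0)
      have hstep : 1 + Real.sqrt (∑ j, r j ^ 2) ≤ (1 + Real.sqrt n) * Real.exp (t * cp) := by
        have hsn : (0:ℝ) ≤ Real.sqrt n := Real.sqrt_nonneg _
        nlinarith [h1]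
      calc (1 + Real.sqrt (∑ j, r j ^ 2)) ^ aexp
          ≤ ((1 + Real.sqrt n) * Real.exp (t * cp)) ^ aexp := by
            apply Real.rpow_le_rpow (add_nonneg zero_le_one (Real.sqrt_nonneg _)) hstep ha0
        _ = (1 + Real.sqrt n) ^ aexp * (Real.exp (t * cp)) ^ aexp :=
            Real.mul_rpow (by positivity) (Real.exp_pos _).le
        _ = (1 + Real.sqrt n) ^ aexp * Real.exp (t * cp * aexp) := by
            rw [Real.rpow_def_of_pos (Real.exp_pos _), Real.log_exp]
    have hupos : 0 < u - aexp * cp := by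
      have h := hSb 0 h0
      simpa using h
    have h3 : (m : ℝ) * suppFn S (fun j => t * ξ j) ≤ t * (u - aexp * cp) := by
      rcases Nat.eq_zero_or_pos m with hm | hm
      · rw [hm]
        simp only [Nat.cast_zero, zero_mul]
        exact mul_nonneg ht hupos.le
      · have hmpos : (0 : ℝ) < (m : ℝ) := Nat.cast_pos.mpr hm
        have hSup : suppFn S (fun j => t * ξ j) ≤ (t * (u - aexp * cp)) / m := by
          apply csSup_le (Set.Nonempty.image _ ⟨0, h0⟩)
          rintro v ⟨s, hs, rfl⟩
          rw [le_div_iff₀ hmpos]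
          have hv : (∑ j, s j * (t * ξ j)) = t * ∑ j, s j * ξ j := by
            rw [Finset.mul_sum]
            exact Finset.sum_congr rfl fun j _ => by ring
          show (∑ j, s j * (t * ξ j)) * (m : ℝ) ≤ t * (u - aexp * cp)
          rw [hv]
          calc t * (∑ j, s j * ξ j) * m = t * ((m : ℝ) * ∑ j, s j * ξ j) := by ring
            _ ≤ t * (u - aexp * cp) := mul_le_mul_of_nonneg_left (hSb s hs).le ht
        calc (m : ℝ) * suppFn S (fun j => t * ξ j)
            ≤ (m : ℝ) * ((t * (u - aexp * cp)) / m) :=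
              mul_le_mul_of_nonneg_left hSup hmpos.le
          _ = t * (u - aexp * cp) := by field_simp
    have hM_le : M ≤ Kc * Real.exp (t * u) := by
      rw [hMdef, hKc]
      calc C * (1 + Real.sqrt (∑ j, r j ^ 2)) ^ aexp *
            Real.exp (m * suppFn S (fun j => t * ξ j))
          ≤ C * ((1 + Real.sqrt n) ^ aexp * Real.exp (t * cp * aexp)) *
            Real.exp (t * (u - aexp * cp)) := by
            apply mul_le_mul
            · exact mul_le_mul_of_nonneg_left h2 hC.le
            · exact Real.exp_le_exp.mpr h3
            · exact (Real.exp_pos _).le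
            · positivity
        _ = C * (1 + Real.sqrt n) ^ aexp * Real.exp (t * u) := by
            have hee : Real.exp (t * cp * aexp) * Real.exp (t * (u - aexp * cp)) =
                Real.exp (t * u) := by
              rw [← Real.exp_add]; congr 1; ring
            calc C * ((1 + Real.sqrt n) ^ aexp * Real.exp (t * cp * aexp)) *
                  Real.exp (t * (u - aexp * cp))
                = C * (1 + Real.sqrt n) ^ aexp *
                  (Real.exp (t * cp * aexp) * Real.exp (t * (u - aexp * cp))) := by ring
              _ = C * (1 + Real.sqrt n) ^ aexp * Real.exp (t * u) := by rw [hee]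
    rw [hprod] at hcb
    have hfin : ‖a α‖ * Real.exp (t * A) ≤
        (Kc * Real.exp (t * (u - A))) * Real.exp (t * A) := by
      calc ‖a α‖ * Real.exp (t * A) ≤ M := hcb
        _ ≤ Kc * Real.exp (t * u) := hM_le
        _ = (Kc * Real.exp (t * (u - A))) * Real.exp (t * A) := by
            have hee : Real.exp (t * (u - A)) * Real.exp (t * A) = Real.exp (t * u) := by
              rw [← Real.exp_add]; congr 1; ring
            rw [hKc, ← hee]; ring
    exact le_of_mul_le_mul_right hfin (Real.exp_pos _)
  have hδ : u - A < 0 := by linarith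
  have htend : Filter.Tendsto (fun t : ℝ => Kc * Real.exp (t * (u - A)))
      Filter.atTop (nhds 0) := by
    have h1 : Filter.Tendsto (fun t : ℝ => t * (u - A)) Filter.atTop Filter.atBot :=
      Filter.tendsto_id.atTop_mul_const_of_neg hδ
    have h2 := (Real.tendsto_exp_atBot.comp h1).const_mul Kc
    simpa using h2
  have hle0 : ‖a α‖ ≤ 0 :=
    ge_of_tendsto htend (Filter.eventually_atTop.mpr ⟨0, fun t ht => key t ht⟩)
  exact norm_eq_zero.mp (le_antisymm hle0 (norm_nonneg _))
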